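/- Fix τ > 0, T > 0, d ∈ ℕ, K ≥ 0 and t ∈ [0,T]. On C([−τ,T];ℝ) × ℝ^d define, for the given t, the distance-type function d_{K,t}((z,σ),(z',σ')) = |σ − σ'| + sup{ |z(s) − z'(u)| : s, u ∈ [−τ,t], |s − u| ≤ K|σ − σ'| }, and for Borel probability measures μ, ν on C([−τ,T];ℝ) × ℝ^d let d^t_BL(μ,ν) = sup{ ∫ φ dμ − ∫ φ dν : φ bounded and Lipschitz with respect to d_{K,t}, with ‖φ‖_∞ + Lip(φ) ≤ 1 }. Let F : ℝ × ℝ × ℝ^d × ℝ^d → ℝ be bounded and Lipschitz (with respect to the sum of the distances in each coordinate) with ‖F‖_BL = ‖F‖_∞ + Lip(F), and let τ̄ : ℝ^d × ℝ^d → [0,τ] be Lipschitz with constant at most K. Define f(t, x, μ, ω) = ∫ F( x(t), z(t − τ̄(ω,σ)), ω, σ ) dμ(z,σ). Then for all x, y ∈ C([−τ,T];ℝ), all Borel probability measures μ, ν on C([−τ,T];ℝ) × ℝ^d, and all ω ∈ ℝ^d: |f(t,x,μ,ω) − f(t,y,ν,ω)| ≤ ‖F‖_BL ( d^t_BL(μ,ν)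 + sup_{s ∈ [−τ,t]} |x(s) − y(s)| ). -/

import Mathlib

open MeasureTheory
open scoped ENNReal

/-- The path space `C([-τ,T];ℝ)` with the uniform norm. -/
abbrev PathSp (τ T : ℝ) := C(Set.Icc (-τ) T, ℝ)

noncomputable instance (τ T : ℝ) : MeasurableSpace (PathSp τ T) := borel _

instance (τ T : ℝ) : BorelSpace (PathSp τ T) := ⟨rfl⟩

/-- Evaluation of a path at time `s` (times outside `[-τ,T]` are clamped). -/
noncomputable def eval (τ T : ℝ) (h : -τ ≤ T) (z : PathSp τ T) (s : ℝ) : ℝ :=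
  z (Set.projIcc (-τ) T h s)

/-- The distance `d_{K,t}((z,σ),(z',σ')) = |σ-σ'| +
    sup{ |z(s)-z'(u)| : s,u ∈ [-τ,t], |s-u| ≤ K|σ-σ'| }`. -/
noncomputable def dKt (τ T : ℝ) (h : -τ ≤ T) {d : ℕ} (K t : ℝ)
    (p q : PathSp τ T × EuclideanSpace ℝ (Fin d)) : ℝ :=
  dist p.2 q.2 +
    sSup {r : ℝ | ∃ s u : ℝ, s ∈ Set.Icc (-τ) t ∧ u ∈ Set.Icc (-τ) t ∧
      |s - u| ≤ K * dist p.2 q.2 ∧ r = |eval τ T h p.1 s - eval τ T h q.1 u|}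

/-- The bounded-Lipschitz distance `d^t_BL` associated to `d_{K,t}`. -/
noncomputable def dBLt (τ T : ℝ) (h : -τ ≤ T) {d : ℕ} (K t : ℝ)
    (μ ν : Measure (PathSp τ T × EuclideanSpace ℝ (Fin d))) : ℝ :=
  sSup {r : ℝ | ∃ (φ : PathSp τ T × EuclideanSpace ℝ (Fin d) → ℝ) (c L : ℝ),
    0 ≤ c ∧ 0 ≤ L ∧ (∀ p, |φ p| ≤ c) ∧
    (∀ p q, |φ p - φ q| ≤ L * dKt τ T h K t p q) ∧ c + L ≤ 1 ∧
    r = (∫ p, φ p ∂μ) - ∫ p, φ p ∂ν}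

/-- the drift of the delayed Kuramoto-type model,
`f(t,x,μ,ω) = ∫ F(x(t), z(t-τ̄(ω,σ)), ω, σ) dμ(z,σ)`, satisfies
`|f(t,x,μ,ω) − f(t,y,ν,ω)| ≤ ‖F‖_BL (d^t_BL(μ,ν) + sup_{s∈[-τ,t]} |x(s)-y(s)|)`. -/
theorem delayed_kuramoto_drift_lipschitz
    (τ T : ℝ) (hτ : 0 < τ) (hT : 0 < T) (hτT : -τ ≤ T) (d : ℕ)
    (K : ℝ) (hK : 0 ≤ K) (t : ℝ) (ht : t ∈ Set.Icc (0 : ℝ) T)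
    (F : ℝ → ℝ → EuclideanSpace ℝ (Fin d) → EuclideanSpace ℝ (Fin d) → ℝ)
    (MF LF : ℝ) (hMF : 0 ≤ MF) (hLF : 0 ≤ LF)
    (hFbdd : ∀ a b ω σ, |F a b ω σ| ≤ MF)
    (hFlip : ∀ a a' b b' ω ω' σ σ',
      |F a b ω σ - F a' b' ω' σ'| ≤
        LF * (|a - a'| + |b - b'| + dist ω ω' + dist σ σ'))
    (τbar : EuclideanSpace ℝ (Fin d) → EuclideanSpace ℝ (Fin d) → ℝ)
    (hτbar : ∀ ω σ, τbar ω σ ∈ Set.Icc (0 : ℝ) τ)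
    (hτbarLip : ∀ ω ω' σ σ',
      |τbar ω σ - τbar ω' σ'| ≤ K * (dist ω ω' + dist σ σ'))
    (x y : PathSp τ T)
    (μ ν : Measure (PathSp τ T × EuclideanSpace ℝ (Fin d)))
    (hμ : IsProbabilityMeasure μ) (hν : IsProbabilityMeasure ν)
    (ω : EuclideanSpace ℝ (Fin d)) :
    |(∫ p, F (eval τ T hτT x t) (eval τ T hτT p.1 (t - τbar ω p.2)) ω p.2 ∂μ) -
        ∫ p, F (eval τ T hτT y t) (eval τ T hτT p.1 (t - τbar ω p.2)) ω p.2 ∂ν| ≤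
      (MF + LF) * (dBLt τ T hτT K t μ ν +
        sSup ((fun s => |eval τ T hτT x s - eval τ T hτT y s|) '' Set.Icc (-τ) t)) := by
  obtain ⟨ht0, htT⟩ := ht
  have hτt : -τ ≤ t := by linarith
  set a := eval τ T hτT x t with ha
  set a' := eval τ T hτT y t with ha'
  set Z : PathSp τ T × EuclideanSpace ℝ (Fin d) → ℝ :=
    fun p => eval τ T hτT p.1 (t - τbar ω p.2) with hZdef
  set Sxy := sSup ((fun s => |eval τ T hτT x s - eval τ T hτT y s|) '' Set.Icc (-τ) t)
    with hSxydef
  -- Basic continuity facts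
  have hτbarCont : Continuous fun σ : EuclideanSpace ℝ (Fin d) => τbar ω σ := by
    refine LipschitzWith.continuous (K := ⟨K, hK⟩) (LipschitzWith.of_dist_le_mul fun σ σ' => ?_)
    have h := hτbarLip ω ω σ σ'
    simp only [dist_self, zero_add] at h
    rw [Real.dist_eq]; exact h
  have hZcont : Continuous Z := by
    have h1 : Continuous fun p : PathSp τ T × EuclideanSpace ℝ (Fin d) =>
        Set.projIcc (-τ) T hτT (t - τbar ω p.2) :=
      continuous_projIcc.comp (continuous_const.sub (hτbarCont.comp continuous_snd))
    exact continuous_fst.eval h1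
  have hFc : ∀ b : ℝ, Continuous fun q : ℝ × EuclideanSpace ℝ (Fin d) => F b q.1 ω q.2 := by
    intro b
    refine LipschitzWith.continuous (K := ⟨2 * LF, by positivity⟩)
      (LipschitzWith.of_dist_le_mul fun p q => ?_)
    have h := hFlip b b p.1 q.1 ω ω p.2 q.2
    have h1 : |p.1 - q.1| ≤ dist p q := by
      rw [← Real.dist_eq]; exact le_max_left _ _
    have h2 : dist p.2 q.2 ≤ dist p q := le_max_right _ _
    have h3 : (0:ℝ) ≤ dist p q := dist_nonneg
    simp only [sub_self, abs_zero, dist_self, add_zero, zero_add] at h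
    rw [Real.dist_eq]
    calc |F b p.1 ω p.2 - F b q.1 ω q.2| ≤ LF * (|p.1 - q.1| + dist p.2 q.2) := h
      _ ≤ (⟨2 * LF, by positivity⟩ : NNReal) * dist p q := by
          simp only [NNReal.coe_mk]
          nlinarith
  have hgcont : ∀ b : ℝ, Continuous fun p => F b (Z p) ω p.2 :=
    fun b => (hFc b).comp (hZcont.prodMk continuous_snd)
  have hInt : ∀ (b : ℝ) (κ : Measure (PathSp τ T × EuclideanSpace ℝ (Fin d))),
      IsProbabilityMeasure κ → Integrable (fun p => F b (Z p) ω p.2) κ := by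
    intro b κ hκ
    refine (integrable_const MF).mono' (hgcont b).aestronglyMeasurable
      (ae_of_all _ fun p => ?_)
    simpa [Real.norm_eq_abs] using hFbdd b (Z p) ω p.2
  -- |Z p - Z q| is dominated by the sup part of dKt
  have hmemS : ∀ p q : PathSp τ T × EuclideanSpace ℝ (Fin d),
      |Z p - Z q| ≤ sSup {r : ℝ | ∃ s u : ℝ, s ∈ Set.Icc (-τ) t ∧ u ∈ Set.Icc (-τ) t ∧
        |s - u| ≤ K * dist p.2 q.2 ∧ r = |eval τ T hτT p.1 s - eval τ T hτT q.1 u|} := by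
    intro p q
    apply le_csSup
    · refine ⟨‖p.1‖ + ‖q.1‖, ?_⟩
      rintro r ⟨s, u, -, -, -, rfl⟩
      have h1 : |eval τ T hτT p.1 s| ≤ ‖p.1‖ := by
        simpa [Real.norm_eq_abs, eval] using p.1.norm_coe_le_norm (Set.projIcc (-τ) T hτT s)
      have h2 : |eval τ T hτT q.1 u| ≤ ‖q.1‖ := by
        simpa [Real.norm_eq_abs, eval] using q.1.norm_coe_le_norm (Set.projIcc (-τ) T hτT u)
      calc |eval τ T hτT p.1 s - eval τ T hτT q.1 u|
          ≤ |eval τ T hτT p.1 s| + |eval τ T hτT q.1 u| := abs_sub _ _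
        _ ≤ ‖p.1‖ + ‖q.1‖ := add_le_add h1 h2
    · obtain ⟨hp0, hpτ⟩ := hτbar ω p.2
      obtain ⟨hq0, hqτ⟩ := hτbar ω q.2
      refine ⟨t - τbar ω p.2, t - τbar ω q.2, ⟨by linarith, by linarith⟩,
        ⟨by linarith, by linarith⟩, ?_, rfl⟩
      have h := hτbarLip ω ω q.2 p.2
      simp only [dist_self, zero_add] at h
      have heq : (t - τbar ω p.2) - (t - τbar ω q.2) = τbar ω q.2 - τbar ω p.2 := by ring
      rw [heq, dist_comm p.2 q.2]
      exact h
  have hg_lip : ∀ (b : ℝ) (p q : PathSp τ T × EuclideanSpace ℝ (Fin d)),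
      |F b (Z p) ω p.2 - F b (Z q) ω q.2| ≤ LF * dKt τ T hτT K t p q := by
    intro b p q
    have h1 := hFlip b b (Z p) (Z q) ω ω p.2 q.2
    simp only [sub_self, abs_zero, dist_self, add_zero, zero_add] at h1
    refine h1.trans ?_
    rw [dKt]
    exact mul_le_mul_of_nonneg_left (by linarith [hmemS p q]) hLF
  -- bounded above sets
  have hBddA : BddAbove {r : ℝ | ∃ (φ : PathSp τ T × EuclideanSpace ℝ (Fin d) → ℝ) (c L : ℝ),
      0 ≤ c ∧ 0 ≤ L ∧ (∀ p, |φ p| ≤ c) ∧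
      (∀ p q, |φ p - φ q| ≤ L * dKt τ T hτT K t p q) ∧ c + L ≤ 1 ∧
      r = (∫ p, φ p ∂μ) - ∫ p, φ p ∂ν} := by
    refine ⟨2, ?_⟩
    rintro r ⟨φ, c, L, hc, hL, hφb, -, hcL, rfl⟩
    have h1 : |∫ p, φ p ∂μ| ≤ c := by
      have := norm_integral_le_of_norm_le_const (μ := μ) (f := φ) (C := c)
        (ae_of_all _ fun p => by simpa [Real.norm_eq_abs] using hφb p)
      simpa [Real.norm_eq_abs, measure_univ] using this
    have h2 : |∫ p, φ p ∂ν| ≤ c := by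
      have := norm_integral_le_of_norm_le_const (μ := ν) (f := φ) (C := c)
        (ae_of_all _ fun p => by simpa [Real.norm_eq_abs] using hφb p)
      simpa [Real.norm_eq_abs, measure_univ] using this
    have h1' := abs_le.mp h1
    have h2' := abs_le.mp h2
    linarith [h1'.1, h1'.2, h2'.1, h2'.2]
  have hSxyBdd : BddAbove ((fun s => |eval τ T hτT x s - eval τ T hτT y s|) '' Set.Icc (-τ) t) := by
    refine ⟨‖x‖ + ‖y‖, ?_⟩
    rintro r ⟨s, -, rfl⟩
    have h1 : |eval τ T hτT x s| ≤ ‖x‖ := by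
      simpa [Real.norm_eq_abs, eval] using x.norm_coe_le_norm (Set.projIcc (-τ) T hτT s)
    have h2 : |eval τ T hτT y s| ≤ ‖y‖ := by
      simpa [Real.norm_eq_abs, eval] using y.norm_coe_le_norm (Set.projIcc (-τ) T hτT s)
    calc |eval τ T hτT x s - eval τ T hτT y s|
        ≤ |eval τ T hτT x s| + |eval τ T hτT y s| := abs_sub _ _
      _ ≤ ‖x‖ + ‖y‖ := add_le_add h1 h2
  have hSxy_ge : |a - a'| ≤ Sxy := by
    rw [hSxydef]
    exact le_csSup hSxyBdd ⟨t, ⟨hτt, le_refl t⟩, rfl⟩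
  -- trivial case
  by_cases hM0 : MF + LF = 0
  · have hMF0 : MF = 0 := by linarith
    have hF0 : ∀ b z σ', F b z ω σ' = 0 := by
      intro b z σ'
      have h := hFbdd b z ω σ'
      rw [hMF0] at h
      exact abs_eq_zero.mp (le_antisymm h (abs_nonneg _))
    rw [hM0, zero_mul]
    simp [hF0]
  have hM : 0 < MF + LF := lt_of_le_of_ne (by linarith) (Ne.symm hM0)
  -- key dBL bound
  have key : ∀ ε : ℝ, |ε| = 1 →
      ε * ((∫ p, F a (Z p) ω p.2 ∂μ) - ∫ p, F a (Z p) ω p.2 ∂ν) ≤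
        (MF + LF) * dBLt τ T hτT K t μ ν := by
    intro ε hε
    have hmem : (ε * ((∫ p, F a (Z p) ω p.2 ∂μ) - ∫ p, F a (Z p) ω p.2 ∂ν)) / (MF + LF) ∈
        {r : ℝ | ∃ (φ : PathSp τ T × EuclideanSpace ℝ (Fin d) → ℝ) (c L : ℝ),
          0 ≤ c ∧ 0 ≤ L ∧ (∀ p, |φ p| ≤ c) ∧
          (∀ p q, |φ p - φ q| ≤ L * dKt τ T hτT K t p q) ∧ c + L ≤ 1 ∧
          r = (∫ p, φ p ∂μ) - ∫ p, φ p ∂ν} := by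
      refine ⟨fun p => ε * F a (Z p) ω p.2 / (MF + LF), MF / (MF + LF), LF / (MF + LF),
        div_nonneg hMF hM.le, div_nonneg hLF hM.le, ?_, ?_, ?_, ?_⟩
      · intro p
        rw [abs_div, abs_mul, hε, one_mul, abs_of_pos hM]
        exact (div_le_div_iff_of_pos_right hM).mpr (hFbdd a (Z p) ω p.2)
      · intro p q
        have heq : ε * F a (Z p) ω p.2 / (MF + LF) - ε * F a (Z q) ω q.2 / (MF + LF)
            = ε * (F a (Z p) ω p.2 - F a (Z q) ω q.2) / (MF + LF) := by ring
        rw [heq, abs_div, abs_mul, hε, one_mul, abs_of_pos hM, div_mul_eq_mul_div]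
        exact (div_le_div_iff_of_pos_right hM).mpr (hg_lip a p q)
      · rw [← add_div, div_self hM.ne']
      · have hIμ := hInt a μ hμ
        have hIν := hInt a ν hν
        rw [integral_div, integral_div, MeasureTheory.integral_const_mul,
          MeasureTheory.integral_const_mul]
        ring
    have hle : (ε * ((∫ p, F a (Z p) ω p.2 ∂μ) - ∫ p, F a (Z p) ω p.2 ∂ν)) / (MF + LF) ≤
        dBLt τ T hτT K t μ ν := by
      rw [dBLt]
      exact le_csSup hBddA hmem
    calc ε * ((∫ p, F a (Z p) ω p.2 ∂μ) - ∫ p, F a (Z p) ω p.2 ∂ν)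
        = (MF + LF) * ((ε * ((∫ p, F a (Z p) ω p.2 ∂μ) - ∫ p, F a (Z p) ω p.2 ∂ν)) / (MF + LF)) := by
          field_simp
      _ ≤ (MF + LF) * dBLt τ T hτT K t μ ν := mul_le_mul_of_nonneg_left hle hM.le
  have hAB : |(∫ p, F a (Z p) ω p.2 ∂μ) - ∫ p, F a (Z p) ω p.2 ∂ν| ≤
      (MF + LF) * dBLt τ T hτT K t μ ν := by
    apply abs_le.mpr
    constructor
    · have h := key (-1) (by norm_num)
      linarith
    · have h := key 1 (by norm_num)
      linarith
  have hBC : |(∫ p, F a (Z p) ω p.2 ∂ν) - ∫ p, F a' (Z p) ω p.2 ∂ν| ≤ LF * |a - a'| := by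
    rw [← integral_sub (hInt a ν hν) (hInt a' ν hν)]
    have hb : ∀ p : PathSp τ T × EuclideanSpace ℝ (Fin d),
        ‖F a (Z p) ω p.2 - F a' (Z p) ω p.2‖ ≤ LF * |a - a'| := by
      intro p
      have h := hFlip a a' (Z p) (Z p) ω ω p.2 p.2
      simp only [sub_self, abs_zero, dist_self, add_zero] at h
      simpa [Real.norm_eq_abs] using h
    have := norm_integral_le_of_norm_le_const (μ := ν) (C := LF * |a - a'|) (ae_of_all _ hb)
    simpa [Real.norm_eq_abs, measure_univ] using this
  have hfinal : LF * |a - a'| ≤ (MF + LF) * Sxy :=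
    mul_le_mul (by linarith) hSxy_ge (abs_nonneg _) (by linarith)
  show |(∫ p, F a (Z p) ω p.2 ∂μ) - ∫ p, F a' (Z p) ω p.2 ∂ν| ≤
      (MF + LF) * (dBLt τ T hτT K t μ ν + Sxy)
  rw [mul_add]
  calc |(∫ p, F a (Z p) ω p.2 ∂μ) - ∫ p, F a' (Z p) ω p.2 ∂ν|
      ≤ |(∫ p, F a (Z p) ω p.2 ∂μ) - ∫ p, F a (Z p) ω p.2 ∂ν| +
        |(∫ p, F a (Z p) ω p.2 ∂ν) - ∫ p, F a' (Z p) ω p.2 ∂ν| := abs_sub_le _ _ _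
    _ ≤ (MF + LF) * dBLt τ T hτT K t μ ν + (MF + LF) * Sxy := by
        have := hBC.trans hfinal
        linarith [hAB]
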